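/- Let (X, Y) be a pair of real random variables on a probability space with X > 0 almost surely, E[X] < ∞ and E[X⁻¹] < ∞. Let F(y) = P(Y ≤ y), and for α = ±1 define T_α(y) = E[X^α 1{Y ≤ y}]. Suppose there is a constant M such that E[X | σ(Y)] ≤ M and E[X⁻¹ | σ(Y)] ≤ M almost surely. Fix constants f ∈ (0, 1) and d > 0, and define the covariance kernels C₁(y, t) = (E[X] · T₋₁(min(y,t)) − f · F(min(y,t))) − (f³/d) · (T₁(y)/E[X] − F(y)) · (T₁(t)/E[X] − F(t)) − E[X] · (T₋₁(y) F(t) + T₋₁(t) F(y) − (E[X⁻¹] + 1) F(y) F(t)), C₂(y, t) = F(min(y,t)) − F(y) F(t), and C(y, t) = C₁(y, t) + f · C₂(y, t). Then there exists a constant K > 0 such that for all y ≤ t, C(y, y) + C(t, t) − 2 C(y, t) ≤ K · (F(t) − F(y)). -/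

import Mathlib

open MeasureTheory Set

set_option maxHeartbeats 1000000 in
/-- Increment bound for the covariance kernel `C = C₁ + f C₂` of the limiting Hájek
empirical process: there is a constant `K > 0` such that, for `y ≤ t`,
`C(y,y) + C(t,t) − 2C(y,t) ≤ K (F(t) − F(y))`. -/
theorem covariance_kernel_increment_bound
    {Ω : Type*} [MeasurableSpace Ω] (P : Measure Ω) [IsProbabilityMeasure P]
    (X Y : Ω → ℝ) (hX : Measurable X) (hY : Measurable Y)
    (hXpos : ∀ᵐ ω ∂P, 0 < X ω)
    (hXint : Integrable X P)
    (hXinvint : Integrable (fun ω => (X ω)⁻¹) P)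
    (M : ℝ)
    (hbound1 : ∀ᵐ ω ∂P,
      (P[X | MeasurableSpace.comap Y Real.measurableSpace]) ω ≤ M)
    (hboundm1 : ∀ᵐ ω ∂P,
      (P[(fun ω => (X ω)⁻¹) | MeasurableSpace.comap Y Real.measurableSpace]) ω ≤ M)
    (f d : ℝ) (hf : f ∈ Set.Ioo (0:ℝ) 1) (hd : 0 < d)
    (F : ℝ → ℝ) (hF : ∀ y, F y = (P {ω | Y ω ≤ y}).toReal)
    (T₁ : ℝ → ℝ) (hT₁ : ∀ y, T₁ y = ∫ ω, (if Y ω ≤ y then X ω else 0) ∂P)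
    (Tneg : ℝ → ℝ) (hTneg : ∀ y, Tneg y = ∫ ω, (if Y ω ≤ y then (X ω)⁻¹ else 0) ∂P)
    (C₁ : ℝ → ℝ → ℝ)
    (hC₁ : ∀ y t, C₁ y t =
      ((∫ ω, X ω ∂P) * Tneg (min y t) - f * F (min y t))
        - (f ^ 3 / d) * (T₁ y / (∫ ω, X ω ∂P) - F y) * (T₁ t / (∫ ω, X ω ∂P) - F t)
        - (∫ ω, X ω ∂P) *
            (Tneg y * F t + Tneg t * F y - ((∫ ω, (X ω)⁻¹ ∂P) + 1) * F y * F t))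
    (C₂ : ℝ → ℝ → ℝ) (hC₂ : ∀ y t, C₂ y t = F (min y t) - F y * F t)
    (C : ℝ → ℝ → ℝ) (hC : ∀ y t, C y t = C₁ y t + f * C₂ y t) :
    ∃ K > 0, ∀ y t : ℝ, y ≤ t →
      C y y + C t t - 2 * C y t ≤ K * (F t - F y) := by
  obtain ⟨hf0, hf1⟩ := hf
  have hm : MeasurableSpace.comap Y Real.measurableSpace
      ≤ (by infer_instance : MeasurableSpace Ω) := hY.comap_le
  set A := ∫ ω, X ω ∂P with hA_def
  set B := ∫ ω, (X ω)⁻¹ ∂P with hB_def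
  have hA0 : 0 ≤ A := integral_nonneg_of_ae (hXpos.mono fun ω h => h.le)
  have hAM : 0 ≤ A * max M 0 := mul_nonneg hA0 (le_max_right M 0)
  refine ⟨A * max M 0 + |A * (B + 1) - f| + 1, by
    have := abs_nonneg (A * (B + 1) - f); linarith, ?_⟩
  intro y t hyt
  -- the middle slice
  set s : Set Ω := Y ⁻¹' Ioc y t with hs_def
  have hms : MeasurableSet[MeasurableSpace.comap Y Real.measurableSpace] s := ⟨Ioc y t, measurableSet_Ioc, rfl⟩
  have hsmeas : MeasurableSet s := hY measurableSet_Ioc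
  have hiic : ∀ u : ℝ, {ω | Y ω ≤ u} = Y ⁻¹' Iic u := fun u => rfl
  have hsplit : Y ⁻¹' Iic t = Y ⁻¹' Iic y ∪ s := by
    rw [hs_def, ← Set.preimage_union, Set.Iic_union_Ioc_eq_Iic hyt]
  have hdisj : Disjoint (Y ⁻¹' Iic y) s :=
    (Set.Iic_disjoint_Ioc le_rfl).preimage Y
  -- F increment equals measure of slice
  have hFs : F t - F y = (P s).toReal := by
    rw [hF, hF, hiic, hiic, hsplit,
      measure_union hdisj hsmeas,
      ENNReal.toReal_add (measure_ne_top P _) (measure_ne_top P _)]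
    ring
  have hPs0 : 0 ≤ (P s).toReal := ENNReal.toReal_nonneg
  have hFy0 : 0 ≤ F y := by rw [hF]; exact ENNReal.toReal_nonneg
  have hFt1 : F t ≤ 1 := by
    rw [hF]
    calc (P {ω | Y ω ≤ t}).toReal ≤ (1 : ENNReal).toReal :=
          ENNReal.toReal_mono ENNReal.one_ne_top prob_le_one
      _ = 1 := ENNReal.toReal_one
  have hΔF0 : 0 ≤ F t - F y := by rw [hFs]; exact hPs0
  have hΔF1 : F t - F y ≤ 1 := by linarith
  -- Tneg as set integral
  have hTset : ∀ u : ℝ, Tneg u = ∫ ω in Y ⁻¹' Iic u, (X ω)⁻¹ ∂P := by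
    intro u
    rw [hTneg, ← integral_indicator (hY measurableSet_Iic)]
    congr 1
  have hTdiff : Tneg t - Tneg y = ∫ ω in s, (X ω)⁻¹ ∂P := by
    rw [hTset, hTset, hsplit,
      setIntegral_union hdisj hsmeas hXinvint.integrableOn hXinvint.integrableOn]
    ring
  have hΔT0 : 0 ≤ Tneg t - Tneg y := by
    rw [hTdiff]
    exact setIntegral_nonneg_of_ae_restrict
      (ae_restrict_of_ae (hXpos.mono fun ω h => by positivity))
  -- conditional expectation bound: Tneg increment ≤ M * ΔF
  have hΔTle : Tneg t - Tneg y ≤ M * (F t - F y) := by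
    rw [hTdiff, hFs]
    have h1 : ∫ ω in s, (X ω)⁻¹ ∂P
        = ∫ ω in s, (P[(fun ω => (X ω)⁻¹) | MeasurableSpace.comap Y Real.measurableSpace]) ω ∂P :=
      (setIntegral_condExp hm hXinvint hms).symm
    have h2 : ∫ ω in s, (P[(fun ω => (X ω)⁻¹) | MeasurableSpace.comap Y Real.measurableSpace]) ω ∂P ≤ ∫ ω in s, M ∂P :=
      setIntegral_mono_ae integrable_condExp.integrableOn
        (integrableOn_const (measure_ne_top P s)) hboundm1
    have h3 : ∫ ω in s, M ∂P = (P s).toReal * M := by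
      rw [setIntegral_const]; simp [smul_eq_mul]; left; rfl
    rw [h1, mul_comm, ← h3]; exact h2
  have hΔTle' : Tneg t - Tneg y ≤ max M 0 * (F t - F y) :=
    hΔTle.trans (mul_le_mul_of_nonneg_right (le_max_left M 0) hΔF0)
  -- algebraic identity
  have hD : C y y + C t t - 2 * C y t
      = A * (Tneg t - Tneg y) * (1 - 2 * (F t - F y))
        - (f ^ 3 / d) * ((T₁ t / A - F t) - (T₁ y / A - F y)) ^ 2
        + (A * (B + 1) - f) * (F t - F y) ^ 2 := by
    simp only [hC, hC₁, hC₂, min_self, min_eq_left hyt]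
    ring
  have hq : 0 ≤ (f ^ 3 / d) * ((T₁ t / A - F t) - (T₁ y / A - F y)) ^ 2 := by
    positivity
  rw [hD]
  set u := Tneg t - Tneg y
  set v := F t - F y
  set c := A * (B + 1) - f
  have h4 : A * u ≤ A * (max M 0 * v) := mul_le_mul_of_nonneg_left hΔTle' hA0
  have e1 : A * u * (1 - 2 * v) ≤ A * (max M 0 * v) := by
    nlinarith [mul_nonneg (mul_nonneg hA0 hΔT0) hΔF0]
  have e2 : c * v ^ 2 ≤ |c| * v := by
    nlinarith [mul_le_mul_of_nonneg_right (le_abs_self c) (sq_nonneg v),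
      mul_nonneg (abs_nonneg c) (mul_nonneg hΔF0 (by linarith : (0:ℝ) ≤ 1 - v))]
  clear_value A B u v c
  nlinarith [e1, e2, hq, hΔF0]
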